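/- For every integer k ≥ 3, letting p = 1/(1 + √(k(k−1)/2)), the inequality k²·p²·(1−p)^{k−2}·(1 + (k−2)p) > 1 holds; equivalently, at this p one has U_{k,1,p}(3) < U_{k,1,p}(2). -/

import Mathlib

open Finset

/-- `U_{k,ℓ,p}(T) = T − (k/ℓ)·∑_{t=0}^{T} (T−t)·C(k,t)·p^{ℓ+t}·(1−p)^{k−t}`. -/
noncomputable def Ufun (k ℓ : ℕ) (p : ℝ) (T : ℕ) : ℝ :=
  (T : ℝ) - ((k : ℝ) / (ℓ : ℝ)) * ∑ t ∈ Finset.range (T + 1),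
    ((T : ℝ) - (t : ℝ)) * (Nat.choose k t : ℝ) * p ^ (ℓ + t) * (1 - p) ^ (k - t)

/-- Truncated alternating binomial sum. -/
noncomputable def Btr (n m : ℕ) (p : ℝ) : ℝ :=
  ∑ j ∈ Finset.range (m + 1), (-1 : ℝ) ^ j * (Nat.choose n j : ℝ) * p ^ j

lemma Btr_succ (n m : ℕ) (p : ℝ) :
    Btr n (m + 1) p = Btr n m p + (-1 : ℝ) ^ (m + 1) * (Nat.choose n (m + 1) : ℝ) * p ^ (m + 1) := by
  simp [Btr, Finset.sum_range_succ]

lemma Btr_rec (n : ℕ) (p : ℝ) : ∀ m, Btr (n + 1) (m + 1) p = Btr n (m + 1) p - p * Btr n m p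
  | 0 => by
      simp [Btr, Finset.sum_range_succ]
      ring
  | (m + 1) => by
      rw [Btr_succ (n + 1) (m + 1), Btr_rec n p m, Btr_succ n (m + 1), Btr_succ n m,
        Nat.choose_succ_succ n (m + 1)]
      push_cast
      ring

lemma Btr_zero_left (p : ℝ) : ∀ m, Btr 0 m p = 1
  | 0 => by simp [Btr]
  | (m + 1) => by rw [Btr_succ, Btr_zero_left p m, Nat.choose_zero_succ]; simp

lemma Btr_bound (p : ℝ) (h0 : 0 ≤ p) (h1 : p ≤ 1) :
    ∀ n m, (Even m → (1 - p) ^ n ≤ Btr n m p) ∧ (Odd m → Btr n m p ≤ (1 - p) ^ n)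
  | 0, m => by
      rw [Btr_zero_left]
      simp
  | (n + 1), 0 => by
      constructor
      · intro _
        have h : Btr (n + 1) 0 p = 1 := by simp [Btr]
        rw [h]
        exact pow_le_one₀ (by linarith) (by linarith)
      · intro h
        exact absurd h (by simp)
  | (n + 1), (m + 1) => by
      obtain ⟨he, ho⟩ := Btr_bound p h0 h1 n m
      obtain ⟨he', ho'⟩ := Btr_bound p h0 h1 n (m + 1)
      have hqn : (0 : ℝ) ≤ (1 - p) ^ n := pow_nonneg (by linarith) n
      constructor
      · intro hev
        have hm : Odd m := by
          have h2 := Nat.even_iff.mp hev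
          exact Nat.odd_iff.mpr (by omega)
        rw [Btr_rec]
        have h1' := ho hm
        have h2' := he' hev
        rw [pow_succ]
        nlinarith
      · intro hod
        have hm : Even m := by
          have h2 := Nat.odd_iff.mp hod
          exact Nat.even_iff.mpr (by omega)
        rw [Btr_rec]
        have h1' := he hm
        have h2' := ho' hod
        rw [pow_succ]
        nlinarith

lemma cast_c3 : ∀ n : ℕ, ((Nat.choose n 3 : ℕ) : ℝ) = n * (n - 1) * (n - 2) / 6
  | 0 => by norm_num
  | (n + 1) => by
      rw [Nat.choose_succ_succ n 2]
      push_cast [Nat.cast_choose_two, cast_c3 n]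
      ring

lemma cast_c4 : ∀ n : ℕ, ((Nat.choose n 4 : ℕ) : ℝ) = n * (n - 1) * (n - 2) * (n - 3) / 24
  | 0 => by norm_num
  | (n + 1) => by
      rw [Nat.choose_succ_succ n 3]
      push_cast [cast_c3 n, cast_c4 n]
      ring

lemma cast_c5 : ∀ n : ℕ,
    ((Nat.choose n 5 : ℕ) : ℝ) = n * (n - 1) * (n - 2) * (n - 3) * (n - 4) / 120
  | 0 => by norm_num
  | (n + 1) => by
      rw [Nat.choose_succ_succ n 4]
      push_cast [cast_c4 n, cast_c5 n]
      ring

lemma trunc5 (n : ℕ) (p : ℝ) (h0 : 0 ≤ p) (h1 : p ≤ 1) :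
    1 - n * p + n * (n - 1) / 2 * p ^ 2 - n * (n - 1) * (n - 2) / 6 * p ^ 3
      + n * (n - 1) * (n - 2) * (n - 3) / 24 * p ^ 4
      - n * (n - 1) * (n - 2) * (n - 3) * (n - 4) / 120 * p ^ 5 ≤ (1 - p) ^ n := by
  have h := (Btr_bound p h0 h1 n 5).2 (by decide)
  have hexp : Btr n 5 p = 1 - n * p + n * (n - 1) / 2 * p ^ 2 - n * (n - 1) * (n - 2) / 6 * p ^ 3
      + n * (n - 1) * (n - 2) * (n - 3) / 24 * p ^ 4
      - n * (n - 1) * (n - 2) * (n - 3) * (n - 4) / 120 * p ^ 5 := by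
    simp only [Btr, Finset.sum_range_succ, Finset.sum_range_zero,
      Nat.choose_zero_right, Nat.choose_one_right, Nat.cast_choose_two, cast_c3, cast_c4, cast_c5]
    push_cast
    ring
  linarith [hexp ▸ h]

set_option maxHeartbeats 1600000 in
/-- The core polynomial inequality. -/
lemma core (u p : ℝ) (hp0 : 0 < p) (hu2 : u ^ 2 = u * p + 2 * (1 - p) ^ 2)
    (hu3 : 3 * p ≤ u) (hp3 : 3 * p ^ 2 ≤ (1 - p) ^ 2) :
    1 < u * (2 + u - 2 * p) *
      (1 - (u - p) + (u - p) * (u - 2 * p) / 2 - (u - p) * (u - 2 * p) * (u - 3 * p) / 6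
        + (u - p) * (u - 2 * p) * (u - 3 * p) * (u - 4 * p) / 24
        - (u - p) * (u - 2 * p) * (u - 3 * p) * (u - 4 * p) * (u - 5 * p) / 120) := by
  have hq : 0 < 1 - p := by nlinarith
  have hple : p ≤ 37 / 100 := by nlinarith
  have hu0 : 0 < u := lt_of_lt_of_le (by positivity) hu3
  have hlb : p + (181 / 64) * (1 - p) ≤ 2 * u := by nlinarith [sq_nonneg (1 - p)]
  have hB : (27 / 20 : ℝ) ≤ 8/5 - 3/10*p - 11/5*p^2 + 47/6*p^3 - 238/15*p^4 + 239/15*p^5 - 6*p^6 := by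
    nlinarith [pow_nonneg hp0.le 3, pow_nonneg hp0.le 5,
      mul_nonneg (mul_nonneg hp0.le hp0.le) hp0.le, sq_nonneg p, mul_pos hp0 hp0,
      pow_le_pow_left₀ hp0.le hple 2, pow_le_pow_left₀ hp0.le hple 4,
      pow_le_pow_left₀ hp0.le hple 6]
  have hprod : (8/5 - 3/10*p - 11/5*p^2 + 47/6*p^3 - 238/15*p^4 + 239/15*p^5 - 6*p^6)
      * (2 * u - (p + (181 / 64) * (1 - p))) ≥ 0 :=
    mul_nonneg (by linarith) (by linarith)
  have hF : 0 < 31/120 + 657/640*p - 5353/384*p^2 + 21725/384*p^3 - 258803/1920*p^4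
      + 11567/64*p^5 - 120797/960*p^6 + 1119/32*p^7 := by
    nlinarith [pow_le_pow_left₀ hp0.le hple 2, pow_le_pow_left₀ hp0.le hple 4,
      pow_le_pow_left₀ hp0.le hple 6, pow_nonneg hp0.le 3, pow_nonneg hp0.le 5,
      pow_nonneg hp0.le 7, sq_nonneg (p - 1/5), sq_nonneg (p - 3/10), mul_pos hp0 hp0]
  have hfin : 0 < (-32/15 + 12/5*p - 62/15*p^2 + 76/5*p^3 - 189/5*p^4 + 160/3*p^5 - 598/15*p^6
      + 12*p^7)
      + (8/5 - 3/10*p - 11/5*p^2 + 47/6*p^3 - 238/15*p^4 + 239/15*p^5 - 6*p^6) * u := by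
    nlinarith [hprod, hF]
  have hGA : u * (2 + u - 2 * p) *
      (1 - (u - p) + (u - p) * (u - 2 * p) / 2 - (u - p) * (u - 2 * p) * (u - 3 * p) / 6
        + (u - p) * (u - 2 * p) * (u - 3 * p) * (u - 4 * p) / 24
        - (u - p) * (u - 2 * p) * (u - 3 * p) * (u - 4 * p) * (u - 5 * p) / 120) - 1
      = (-32/15 + 12/5*p - 62/15*p^2 + 76/5*p^3 - 189/5*p^4 + 160/3*p^5 - 598/15*p^6 + 12*p^7)
      + (8/5 - 3/10*p - 11/5*p^2 + 47/6*p^3 - 238/15*p^4 + 239/15*p^5 - 6*p^6) * u := by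
    linear_combination (-17/30 + 1/15*p - 41/30*p^2 + 24/5*p^3 - 119/15*p^4 + 6*p^5
      + (-1/5 - 4/15*p - 22/15*p^2 + 29/15*p^3 - 5*p^4) * u
      + (13/60 + 17/30*p + 1/5*p^2 + 163/60*p^3) * u^2
      + (-1/10 - 23/120*p - 101/120*p^2) * u^3
      + (1/40 + 2/15*p) * u^4 - 1/120 * u^5) * hu2
  linarith

set_option maxHeartbeats 1600000 in
theorem U3_lt_U2_at_critical_point (k : ℕ) (hk : 3 ≤ k) (p : ℝ)
    (hp : p = 1 / (1 + Real.sqrt ((k:ℝ) * ((k:ℝ) - 1) / 2))) :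
    1 < (k:ℝ) ^ 2 * p ^ 2 * (1 - p) ^ (k - 2) * (1 + ((k:ℝ) - 2) * p) ∧
    Ufun k 1 p 3 < Ufun k 1 p 2 := by
  have hk3 : (3 : ℝ) ≤ (k : ℝ) := by exact_mod_cast hk
  set x : ℝ := (k : ℝ) with hx
  have harg : 0 ≤ x * (x - 1) / 2 := by nlinarith
  set s : ℝ := Real.sqrt (x * (x - 1) / 2) with hs
  have hs2 : s ^ 2 = x * (x - 1) / 2 := Real.sq_sqrt harg
  have hs0 : 0 ≤ s := Real.sqrt_nonneg _
  have hs1 : 1 ≤ s := by nlinarith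
  have hden : (0 : ℝ) < 1 + s := by linarith
  have hp0 : 0 < p := by rw [hp]; positivity
  have hsp : s * p = 1 - p := by
    rw [hp]; field_simp; ring
  have hq0 : 0 < 1 - p := by rw [← hsp]; positivity
  have hc : x * (x - 1) * p ^ 2 = 2 * (1 - p) ^ 2 := by
    have : (s * p) ^ 2 = (1 - p) ^ 2 := by rw [hsp]
    nlinarith [this, hs2]
  have hp3 : 3 * p ^ 2 ≤ (1 - p) ^ 2 := by nlinarith [sq_nonneg p]
  have hu2 : (x * p) ^ 2 = (x * p) * p + 2 * (1 - p) ^ 2 := by linear_combination hc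
  have hu3 : 3 * p ≤ x * p := by nlinarith
  have hcore := core (x * p) p hp0 hu2 hu3 hp3
  -- truncation at n = k - 1
  have hk1 : ((k - 1 : ℕ) : ℝ) = x - 1 := by
    have : (1 : ℕ) ≤ k := by omega
    push_cast [this]
    ring
  have htr := trunc5 (k - 1) p hp0.le (by linarith)
  rw [hk1] at htr
  have hcoefpos : 0 < x * p * (2 + (x - 2) * p) := by
    have h1 : 0 < 2 + (x - 2) * p := by nlinarith
    have h2 : 0 < x * p := by nlinarith
    exact mul_pos h2 h1
  have hM : 1 < x * p * (1 - p) ^ (k - 1) * (2 + (x - 2) * p) := by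
    have h1 : x * p * (2 + (x - 2) * p) *
        (1 - (x-1) * p + (x-1) * ((x-1) - 1) / 2 * p ^ 2
          - (x-1) * ((x-1) - 1) * ((x-1) - 2) / 6 * p ^ 3
          + (x-1) * ((x-1) - 1) * ((x-1) - 2) * ((x-1) - 3) / 24 * p ^ 4
          - (x-1) * ((x-1) - 1) * ((x-1) - 2) * ((x-1) - 3) * ((x-1) - 4) / 120 * p ^ 5)
        ≤ x * p * (2 + (x - 2) * p) * (1 - p) ^ (k - 1) :=
      mul_le_mul_of_nonneg_left htr hcoefpos.le
    have h2 : x * p * (2 + (x - 2) * p) *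
        (1 - (x-1) * p + (x-1) * ((x-1) - 1) / 2 * p ^ 2
          - (x-1) * ((x-1) - 1) * ((x-1) - 2) / 6 * p ^ 3
          + (x-1) * ((x-1) - 1) * ((x-1) - 2) * ((x-1) - 3) / 24 * p ^ 4
          - (x-1) * ((x-1) - 1) * ((x-1) - 2) * ((x-1) - 3) * ((x-1) - 4) / 120 * p ^ 5)
        = (x * p) * (2 + x * p - 2 * p) *
          (1 - (x * p - p) + (x * p - p) * (x * p - 2 * p) / 2
            - (x * p - p) * (x * p - 2 * p) * (x * p - 3 * p) / 6
            + (x * p - p) * (x * p - 2 * p) * (x * p - 3 * p) * (x * p - 4 * p) / 24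
            - (x * p - p) * (x * p - 2 * p) * (x * p - 3 * p) * (x * p - 4 * p) * (x * p - 5 * p) / 120) := by
      ring
    linarith [hcore, h1, h2]
  have e2 : (1 - p) ^ (k - 1) = (1 - p) ^ (k - 2) * (1 - p) := by
    rw [← pow_succ]
    congr 1
    omega
  have e1 : (1 - p) ^ k = (1 - p) ^ (k - 2) * (1 - p) ^ 2 := by
    rw [← pow_add]
    congr 1
    omega
  constructor
  · have hid : x * p * (1 + (x - 2) * p) = (1 - p) * (2 + (x - 2) * p) := by
      linear_combination hc
    have : x * p * (1 - p) ^ (k - 1) * (2 + (x - 2) * p)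
        = x ^ 2 * p ^ 2 * (1 - p) ^ (k - 2) * (1 + (x - 2) * p) := by
      rw [e2]
      linear_combination (- x * p * (1 - p) ^ (k - 2)) * hid
    linarith [hM, this]
  · have hsum : x * (3 * p * (1 - p) ^ k + 2 * x * p ^ 2 * (1 - p) ^ (k - 1)
        + (x * (x - 1) / 2) * p ^ 3 * (1 - p) ^ (k - 2))
        - x * (2 * p * (1 - p) ^ k + x * p ^ 2 * (1 - p) ^ (k - 1))
        = x * p * (1 - p) ^ (k - 1) * (2 + (x - 2) * p) := by
      rw [e1, e2]
      linear_combination (x * p * (1 - p) ^ (k - 2) / 2) * hc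
    simp only [Ufun, Finset.sum_range_succ, Finset.sum_range_zero, Nat.sub_zero,
      Nat.choose_zero_right, Nat.choose_one_right, Nat.cast_choose_two]
    push_cast
    rw [← hx]
    linarith [hsum, hM]
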